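/- For every integer n ≥ 2 and every 1 ≤ k ≤ n−1, the Gårding cone Γ_{k+1} is contained in the Gårding cone Γ_k; that is, the connected component of {λ ∈ ℝⁿ : σ_{k+1}(λ) > 0} containing (1,…,1) is a subset of the connected component of {λ ∈ ℝⁿ : σ_k(λ) > 0} containing (1,…,1). -/

import Mathlib

open Polynomial

namespace GardingAux

lemma msum_nonneg (s : Multiset ℝ) (h : ∀ x ∈ s, 0 ≤ x) : 0 ≤ s.sum := by
  induction s using Multiset.induction with
  | empty => simp
  | cons a s ih =>
    rw [Multiset.sum_cons]
    have h1 := h a (Multiset.mem_cons_self a s)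
    have h2 := ih fun x hx => h x (Multiset.mem_cons_of_mem hx)
    linarith

lemma msum_pos (s : Multiset ℝ) (h : ∀ x ∈ s, 0 < x) (hs : s ≠ 0) : 0 < s.sum := by
  induction s using Multiset.induction with
  | empty => simp at hs
  | cons a s ih =>
    rw [Multiset.sum_cons]
    have ha := h a (Multiset.mem_cons_self a s)
    have h2 : 0 ≤ s.sum := msum_nonneg s fun x hx => (h x (Multiset.mem_cons_of_mem hx)).le
    linarith

lemma mprod_pos (s : Multiset ℝ) (h : ∀ x ∈ s, 0 < x) : 0 < s.prod := by
  induction s using Multiset.induction with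
  | empty => simp
  | cons a s ih =>
    rw [Multiset.prod_cons]
    exact mul_pos (h a (Multiset.mem_cons_self a s))
      (ih fun x hx => h x (Multiset.mem_cons_of_mem hx))

lemma esymm_zero' (s : Multiset ℝ) : s.esymm 0 = 1 := by
  simp [Multiset.esymm]

lemma esymm_eq_zero_of_lt {s : Multiset ℝ} {j : ℕ} (h : Multiset.card s < j) :
    s.esymm j = 0 := by
  simp [Multiset.esymm, Multiset.powersetCard_eq_empty _ h]

lemma esymm_pos_of_pos (s : Multiset ℝ) (h : ∀ x ∈ s, 0 < x) {j : ℕ}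
    (hj : j ≤ Multiset.card s) : 0 < s.esymm j := by
  apply msum_pos
  · intro x hx
    obtain ⟨t, ht, rfl⟩ := Multiset.mem_map.mp hx
    have htle := (Multiset.mem_powersetCard.mp ht).1
    exact mprod_pos t fun y hy => h y (Multiset.mem_of_le htle hy)
  · rw [Ne, Multiset.map_eq_zero, ← Multiset.card_eq_zero, Multiset.card_powersetCard]
    exact (Nat.choose_pos hj).ne'

/-- The roots (negated) of the derivative of `∏ (X + r)`: one fewer variable, with
all elementary symmetric functions rescaled by positive factors. -/
lemma step_exists (s : Multiset ℝ) (hs : 1 ≤ Multiset.card s) :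
    ∃ t : Multiset ℝ, Multiset.card t = Multiset.card s - 1 ∧
      ∀ i, (Multiset.card s : ℝ) * t.esymm i
          = ((Multiset.card s - i : ℕ) : ℝ) * s.esymm i := by
  set n := Multiset.card s with hn
  set q : ℝ[X] := (s.map fun r => X + C r).prod with hq
  have hq' : q = ((s.map fun r => -r).map fun a => X - C a).prod := by
    rw [hq, Multiset.map_map]
    congr 1
    apply Multiset.map_congr rfl
    intro x _
    simp [sub_neg_eq_add]
  have hmonic : q.Monic := by
    exact monic_multiset_prod_of_monic s _ fun a _ => monic_X_add_C a
  have hdeg : q.natDegree = n := by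
    have hmon' : ∀ f ∈ s.map fun r => X + C r, Monic f := by
      intro f hf
      obtain ⟨r, _, rfl⟩ := Multiset.mem_map.mp hf
      exact monic_X_add_C r
    rw [hq, natDegree_multiset_prod_of_monic _ hmon', Multiset.map_map]
    have h1 : (Multiset.map (Polynomial.natDegree ∘ fun r => X + C r) s)
        = Multiset.map (fun _ => 1) s := by
      apply Multiset.map_congr rfl
      intro x _
      simp [natDegree_X_add_C]
    rw [h1]
    simp [hn]
  have hroots : q.roots = s.map fun r => -r := by
    rw [hq']; exact roots_multiset_prod_X_sub_C _
  have hcardroots : Multiset.card q.roots = n := by rw [hroots, Multiset.card_map]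
  have hqcoeff : q.coeff n = 1 := by
    have := hmonic
    rw [Monic, leadingCoeff, hdeg] at this
    exact this
  have hcoeffd : (derivative q).coeff (n - 1) = (n : ℝ) := by
    rw [coeff_derivative]
    have e1 : n - 1 + 1 = n := Nat.succ_pred_eq_of_pos hs
    rw [e1, hqcoeff, one_mul]
    have : ((n - 1 : ℕ) : ℝ) + 1 = ((n - 1 + 1 : ℕ) : ℝ) := by push_cast; ring
    rw [this, e1]
  have hnne : (n : ℝ) ≠ 0 := by
    have : 0 < n := hs
    exact_mod_cast this.ne'
  have hdne : derivative q ≠ 0 := by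
    intro h
    rw [h, coeff_zero] at hcoeffd
    exact hnne hcoeffd.symm
  have hdegd : (derivative q).natDegree = n - 1 := by
    refine le_antisymm ?_ ?_
    · have := natDegree_derivative_le q
      rw [hdeg] at this
      exact this
    · apply le_natDegree_of_ne_zero
      rw [hcoeffd]
      exact hnne
  have hcardd : Multiset.card (derivative q).roots = n - 1 := by
    have h1 := card_roots_le_derivative q
    have h2 := card_roots' (derivative q)
    rw [hcardroots] at h1
    rw [hdegd] at h2
    omega
  have hsplit : Splits (derivative q) :=
    splits_iff_card_roots.mpr (by rw [hcardd, hdegd])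
  have hlead : (derivative q).leadingCoeff = (n : ℝ) := by
    rw [leadingCoeff, hdegd, hcoeffd]
  have heq : derivative q
      = C (n : ℝ) * ((derivative q).roots.map fun a => X - C a).prod := by
    conv_lhs => rw [hsplit.eq_prod_roots]
    rw [hlead]
  refine ⟨(derivative q).roots.map fun a => -a,
    by rw [Multiset.card_map, hcardd], ?_⟩
  intro i
  by_cases hi : i ≤ n - 1
  · have key1 : (derivative q).coeff (n - 1 - i) = ((n - i : ℕ) : ℝ) * s.esymm i := by
      rw [coeff_derivative]
      have e1 : n - 1 - i + 1 = n - i := by omega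
      rw [e1]
      have e2 : q.coeff (n - i) = s.esymm i := by
        rw [hq, Multiset.prod_X_add_C_coeff s (by omega : n - i ≤ Multiset.card s)]
        congr 1
        omega
      rw [e2]
      have e3 : ((n - 1 - i : ℕ) : ℝ) + 1 = ((n - i : ℕ) : ℝ) := by
        have : ((n - 1 - i : ℕ) : ℝ) + 1 = ((n - 1 - i + 1 : ℕ) : ℝ) := by push_cast; ring
        rw [this, e1]
      rw [e3]
      ring
    have key2 : (derivative q).coeff (n - 1 - i)
        = (n : ℝ) * (((derivative q).roots.map fun a => -a).esymm i) := by
      conv_lhs => rw [heq]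
      rw [coeff_C_mul]
      have hprodeq : ((derivative q).roots.map fun a => X - C a).prod
          = (((derivative q).roots.map fun a => -a).map fun r => X + C r).prod := by
        rw [Multiset.map_map]
        congr 1
        apply Multiset.map_congr rfl
        intro x _
        simp [sub_eq_add_neg]
      rw [hprodeq,
        Multiset.prod_X_add_C_coeff _ (by rw [Multiset.card_map, hcardd]; omega)]
      congr 2
      rw [Multiset.card_map, hcardd]
      omega
    rw [← key2, key1]
  · have h1 : (n - i : ℕ) = 0 := by omega
    have h2 : (((derivative q).roots.map fun a => -a)).esymm i = 0 :=
      esymm_eq_zero_of_lt (by rw [Multiset.card_map, hcardd]; omega)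
    rw [h1, h2]
    simp

/-- Key sign lemma: if `σ_1,…,σ_{m-1} ≥ 0` and `σ_m > 0` then all `σ_j > 0` for `j ≤ m`. -/
lemma esymm_all_pos : ∀ (N : ℕ) (s : Multiset ℝ) (m : ℕ), 1 ≤ m → m ≤ Multiset.card s →
    Multiset.card s ≤ N →
    (∀ j, 1 ≤ j → j < m → 0 ≤ s.esymm j) → 0 < s.esymm m →
    ∀ j, j ≤ m → 0 < s.esymm j := by
  intro N
  induction N with
  | zero =>
    intro s m hm hms hsN
    omega
  | succ N ih =>
    intro s m hm hms hsN hnonneg hpos j hj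
    by_cases hcase : Multiset.card s ≤ N
    · exact ih s m hm hms hcase hnonneg hpos j hj
    · have hcard : Multiset.card s = N + 1 := by omega
      by_cases hbase : m = Multiset.card s
      · -- base case: m = card s; show all elements are positive
        have hall : ∀ a ∈ s, 0 < a := by
          intro a ha
          by_contra hcon
          push_neg at hcon
          set x := -a with hxdef
          have hx : 0 ≤ x := by simp [hxdef]; linarith
          have h0 : ((s.map fun r => X + C r).prod).eval x = 0 := by
            rw [eval_multiset_prod]
            apply Multiset.prod_eq_zero
            rw [Multiset.map_map]
            refine Multiset.mem_map.mpr ⟨a, ha, ?_⟩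
            simp [hxdef]
          have h1 : 0 < ((s.map fun r => X + C r).prod).eval x := by
            rw [Multiset.prod_X_add_C_eq_sum_esymm, eval_finset_sum]
            apply Finset.sum_pos'
            · intro i hi
              rw [Finset.mem_range] at hi
              simp only [eval_mul, eval_C, eval_pow, eval_X]
              apply mul_nonneg _ (pow_nonneg hx _)
              rcases Nat.eq_zero_or_pos i with h | h
              · rw [h, esymm_zero' s]; norm_num
              · rcases lt_or_ge i m with h' | h'
                · exact hnonneg i h h'
                · have : i = m := by omega
                  rw [this]; exact hpos.le
            · refine ⟨m, Finset.mem_range.mpr (by omega), ?_⟩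
              simp only [eval_mul, eval_C, eval_pow, eval_X]
              have : Multiset.card s - m = 0 := by omega
              rw [this, pow_zero, mul_one]
              exact hpos
          rw [h0] at h1
          exact lt_irrefl 0 h1
        exact esymm_pos_of_pos s hall (by omega)
      · -- inductive step: reduce using the derivative
        have hlt : m < Multiset.card s := lt_of_le_of_ne hms hbase
        obtain ⟨t, htc, hte⟩ := step_exists s (by omega)
        have hn0 : (0 : ℝ) < (Multiset.card s : ℝ) := by
          have : 0 < Multiset.card s := by omega
          exact_mod_cast this
        have hnonneg' : ∀ j', 1 ≤ j' → j' < m → 0 ≤ t.esymm j' := by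
          intro j' h1 h2
          have he := hte j'
          have hc : (0 : ℝ) < ((Multiset.card s - j' : ℕ) : ℝ) := by
            have : 0 < Multiset.card s - j' := by omega
            exact_mod_cast this
          nlinarith [hnonneg j' h1 h2]
        have hpos' : 0 < t.esymm m := by
          have he := hte m
          have hc : (0 : ℝ) < ((Multiset.card s - m : ℕ) : ℝ) := by
            have : 0 < Multiset.card s - m := by omega
            exact_mod_cast this
          nlinarith
        have hres := ih t m hm (by omega) (by omega) hnonneg' hpos' j hj
        have he := hte j
        have hc : (0 : ℝ) < ((Multiset.card s - j : ℕ) : ℝ) := by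
          have : 0 < Multiset.card s - j := by omega
          exact_mod_cast this
        nlinarith

end GardingAux

/-- The `k`-th elementary symmetric function of `l = (l 0, …, l (n-1)) ∈ ℝⁿ`. -/
noncomputable def esymm (n k : ℕ) (l : Fin n → ℝ) : ℝ :=
  ∑ s ∈ Finset.powersetCard k (Finset.univ : Finset (Fin n)), ∏ i ∈ s, l i

/-- The Gårding cone `Γ_k ⊆ ℝⁿ`: the connected component of `{λ : σ_k(λ) > 0}`
containing the vector `(1,…,1)`. -/
noncomputable def gardingCone (n k : ℕ) : Set (Fin n → ℝ) :=
  connectedComponentIn {l : Fin n → ℝ | 0 < esymm n k l} (fun _ => 1)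

namespace GardingAux

lemma esymm_eq (n j : ℕ) (l : Fin n → ℝ) :
    esymm n j l = (Multiset.map l Finset.univ.val).esymm j := by
  rw [Finset.esymm_map_val]
  rfl

lemma card_map_univ (n : ℕ) (l : Fin n → ℝ) :
    Multiset.card (Multiset.map l Finset.univ.val) = n := by
  simp

lemma esymm_continuous (n j : ℕ) : Continuous (esymm n j) := by
  unfold esymm
  exact continuous_finset_sum _ fun s _ => continuous_finset_prod _ fun i _ => continuous_apply i

lemma esymm_one_pos (n j : ℕ) (hj : j ≤ n) : 0 < esymm n j (fun _ => (1 : ℝ)) := by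
  unfold esymm
  simp only [Finset.prod_const_one, Finset.sum_const, nsmul_eq_mul, mul_one]
  rw [Finset.card_powersetCard, Finset.card_univ, Fintype.card_fin]
  exact_mod_cast Nat.choose_pos hj

end GardingAux

/-- For `n ≥ 2` and `1 ≤ k ≤ n - 1`, the Gårding cone `Γ_{k+1}` is contained in `Γ_k`. -/
theorem gardingCone_succ_subset (n k : ℕ) (hn : 2 ≤ n) (hk1 : 1 ≤ k) (hk : k ≤ n - 1) :
    gardingCone n (k + 1) ⊆ gardingCone n k := by
  classical
  have hkn : k + 1 ≤ n := by omega
  set U : Set (Fin n → ℝ) := {l | 0 < esymm n (k + 1) l} with hU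
  set G : Set (Fin n → ℝ) := {l | ∀ j, 1 ≤ j → j ≤ k + 1 → 0 < esymm n j l} with hG
  set W : Set (Fin n → ℝ) := {l | ∃ j, 1 ≤ j ∧ j ≤ k + 1 ∧ esymm n j l < 0} with hW
  have hGopen : IsOpen G := by
    have hGeq : G = ⋂ j ∈ Finset.Icc 1 (k + 1), {l : Fin n → ℝ | 0 < esymm n j l} := by
      ext l
      simp only [hG, Set.mem_setOf_eq, Set.mem_iInter, Finset.mem_Icc]
      constructor
      · intro h j hj
        exact h j hj.1 hj.2
      · intro h j h1 h2
        exact h j ⟨h1, h2⟩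
    rw [hGeq]
    exact isOpen_biInter_finset fun j _ =>
      isOpen_lt continuous_const (GardingAux.esymm_continuous n j)
  have hWopen : IsOpen W := by
    have hWeq : W = ⋃ (j : ℕ), ⋃ (_ : 1 ≤ j ∧ j ≤ k + 1), {l : Fin n → ℝ | esymm n j l < 0} := by
      ext l
      simp only [hW, Set.mem_setOf_eq, Set.mem_iUnion]
      constructor
      · rintro ⟨j, h1, h2, h3⟩
        exact ⟨j, ⟨h1, h2⟩, h3⟩
      · rintro ⟨j, ⟨h1, h2⟩, h3⟩
        exact ⟨j, h1, h2, h3⟩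
    rw [hWeq]
    exact isOpen_iUnion fun j => isOpen_iUnion fun _ =>
      isOpen_lt (GardingAux.esymm_continuous n j) continuous_const
  have honeG : (fun _ => (1 : ℝ)) ∈ G := fun j h1 h2 =>
    GardingAux.esymm_one_pos n j (le_trans h2 hkn)
  have honeU : (fun _ => (1 : ℝ)) ∈ U := GardingAux.esymm_one_pos n (k + 1) hkn
  have hcover : U ⊆ G ∪ W := by
    intro l hl
    by_cases hw : l ∈ W
    · exact Or.inr hw
    · left
      simp only [hW, Set.mem_setOf_eq, not_exists] at hw
      have hnn : ∀ j, 1 ≤ j → j ≤ k + 1 → 0 ≤ esymm n j l := by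
        intro j h1 h2
        by_contra hcon
        push_neg at hcon
        exact hw j ⟨h1, h2, hcon⟩
      intro j h1 h2
      rw [GardingAux.esymm_eq]
      refine GardingAux.esymm_all_pos n (Multiset.map l Finset.univ.val) (k + 1) (by omega)
        (by rw [GardingAux.card_map_univ]; exact hkn)
        (le_of_eq (GardingAux.card_map_univ n l)) ?_ ?_ j h2
      · intro j' hj1 hj2
        rw [← GardingAux.esymm_eq]
        exact hnn j' hj1 (by omega)
      · rw [← GardingAux.esymm_eq]
        exact hl
  have hΓsub : gardingCone n (k + 1) ⊆ U := connectedComponentIn_subset _ _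
  have hpre : IsPreconnected (gardingCone n (k + 1)) := isPreconnected_connectedComponentIn
  have hΓG : gardingCone n (k + 1) ⊆ G := by
    intro l hl
    rcases hcover (hΓsub hl) with h | h
    · exact h
    · exfalso
      have hne := hpre G W hGopen hWopen (hΓsub.trans hcover)
        ⟨_, mem_connectedComponentIn honeU, honeG⟩ ⟨l, hl, h⟩
      obtain ⟨y, _, hyG, hyW⟩ := hne
      obtain ⟨j, h1, h2, h3⟩ := hyW
      exact absurd (hyG j h1 h2) (not_lt.mpr h3.le)
  have hsubk : gardingCone n (k + 1) ⊆ {l : Fin n → ℝ | 0 < esymm n k l} := fun l hl =>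
    hΓG hl k hk1 (by omega)
  exact hpre.subset_connectedComponentIn (mem_connectedComponentIn honeU) hsubk
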